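/- Let p > 0, h > 0, N ∈ ℕ, a ∈ ℝ, with knots x_j = a + jh for j = −3,…,N+3, and set s = sinh(ph), c = cosh(ph), α₂ = p(1−c)/(2(phc−s)). For real coefficients δ_{−1}, …, δ_{N+1}, the function U_N(x) = Σ_{i=−1}^{N+1} δ_i φ_i(x) satisfies U_N′(x_m) = α₂δ_{m−1} − α₂δ_{m+1} for every m = 0, …, N. -/

import Mathlib

/-- The exponential B-spline `φ_i` with parameter `p`, mesh size `h` and knots
`x_j = x₀ + j·h`, defined piecewise on `[x_{i−2}, x_{i+2}]` and zero elsewhere. -/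
noncomputable def expBspline (p h x₀ : ℝ) (i : ℤ) : ℝ → ℝ := fun x =>
  let s := Real.sinh (p * h)
  let c := Real.cosh (p * h)
  let a₁ := p * h * c / (p * h * c - s)
  let b₁ := p / 2 * ((c * (c - 1) + s ^ 2) / ((p * h * c - s) * (1 - c)))
  let b₂ := p / (2 * (p * h * c - s))
  let c₁ := 1 / 4 * ((Real.exp (-(p * h)) * (1 - c) + s * (Real.exp (-(p * h)) - 1)) /
      ((p * h * c - s) * (1 - c)))
  let d₁ := 1 / 4 * ((Real.exp (p * h) * (c - 1) + s * (Real.exp (p * h) - 1)) /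
      ((p * h * c - s) * (1 - c)))
  let X : ℤ → ℝ := fun j => x₀ + (j : ℝ) * h
  if X (i - 2) ≤ x ∧ x ≤ X (i - 1) then
    b₂ * ((X (i - 2) - x) - Real.sinh (p * (X (i - 2) - x)) / p)
  else if X (i - 1) ≤ x ∧ x ≤ X i then
    a₁ + b₁ * (X i - x) + c₁ * Real.exp (p * (X i - x)) + d₁ * Real.exp (-(p * (X i - x)))
  else if X i ≤ x ∧ x ≤ X (i + 1) then
    a₁ + b₁ * (x - X i) + c₁ * Real.exp (p * (x - X i)) + d₁ * Real.exp (-(p * (x - X i)))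
  else if X (i + 1) ≤ x ∧ x ≤ X (i + 2) then
    b₂ * ((x - X (i + 2)) - Real.sinh (p * (x - X (i + 2))) / p)
  else 0

noncomputable def A1 (p h : ℝ) : ℝ :=
  p * h * Real.cosh (p * h) / (p * h * Real.cosh (p * h) - Real.sinh (p * h))
noncomputable def B1 (p h : ℝ) : ℝ :=
  p / 2 * ((Real.cosh (p * h) * (Real.cosh (p * h) - 1) + Real.sinh (p * h) ^ 2) /
    ((p * h * Real.cosh (p * h) - Real.sinh (p * h)) * (1 - Real.cosh (p * h))))
noncomputable def B2 (p h : ℝ) : ℝ :=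
  p / (2 * (p * h * Real.cosh (p * h) - Real.sinh (p * h)))
noncomputable def C1 (p h : ℝ) : ℝ :=
  1 / 4 * ((Real.exp (-(p * h)) * (1 - Real.cosh (p * h)) +
      Real.sinh (p * h) * (Real.exp (-(p * h)) - 1)) /
    ((p * h * Real.cosh (p * h) - Real.sinh (p * h)) * (1 - Real.cosh (p * h))))
noncomputable def D1 (p h : ℝ) : ℝ :=
  1 / 4 * ((Real.exp (p * h) * (Real.cosh (p * h) - 1) +
      Real.sinh (p * h) * (Real.exp (p * h) - 1)) /
    ((p * h * Real.cosh (p * h) - Real.sinh (p * h)) * (1 - Real.cosh (p * h))))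

lemma expBspline_apply (p h x₀ : ℝ) (i : ℤ) (x : ℝ) :
    expBspline p h x₀ i x =
      if x₀ + ((i : ℝ) - 2) * h ≤ x ∧ x ≤ x₀ + ((i : ℝ) - 1) * h then
        B2 p h * ((x₀ + ((i : ℝ) - 2) * h - x) - Real.sinh (p * (x₀ + ((i : ℝ) - 2) * h - x)) / p)
      else if x₀ + ((i : ℝ) - 1) * h ≤ x ∧ x ≤ x₀ + (i : ℝ) * h then
        A1 p h + B1 p h * (x₀ + (i : ℝ) * h - x) + C1 p h * Real.exp (p * (x₀ + (i : ℝ) * h - x))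
          + D1 p h * Real.exp (-(p * (x₀ + (i : ℝ) * h - x)))
      else if x₀ + (i : ℝ) * h ≤ x ∧ x ≤ x₀ + ((i : ℝ) + 1) * h then
        A1 p h + B1 p h * (x - (x₀ + (i : ℝ) * h)) + C1 p h * Real.exp (p * (x - (x₀ + (i : ℝ) * h)))
          + D1 p h * Real.exp (-(p * (x - (x₀ + (i : ℝ) * h))))
      else if x₀ + ((i : ℝ) + 1) * h ≤ x ∧ x ≤ x₀ + ((i : ℝ) + 2) * h then
        B2 p h * ((x - (x₀ + ((i : ℝ) + 2) * h)) - Real.sinh (p * (x - (x₀ + ((i : ℝ) + 2) * h))) / p)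
      else 0 := by
  simp only [expBspline, A1, B1, B2, C1, D1]
  push_cast
  rfl

lemma den_pos {p h : ℝ} (hp : 0 < p) (hh : 0 < h) :
    0 < p * h * Real.cosh (p * h) - Real.sinh (p * h) := by
  have hph : 0 < p * h := mul_pos hp hh
  have key : StrictMonoOn (fun x : ℝ => x * Real.cosh x - Real.sinh x) (Set.Ici 0) := by
    apply strictMonoOn_of_deriv_pos (convex_Ici 0)
    · exact ((continuous_id.mul Real.continuous_cosh).sub Real.continuous_sinh).continuousOn
    · intro x hx
      rw [interior_Ici, Set.mem_Ioi] at hx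
      have hd : HasDerivAt (fun x : ℝ => x * Real.cosh x - Real.sinh x) (x * Real.sinh x) x := by
        have h1 : HasDerivAt (fun x : ℝ => x * Real.cosh x)
            (1 * Real.cosh x + x * Real.sinh x) x :=
          (hasDerivAt_id x).mul (Real.hasDerivAt_cosh x)
        have := h1.fun_sub (Real.hasDerivAt_sinh x)
        refine this.congr_deriv ?_
        ring
      rw [hd.deriv]
      exact mul_pos hx (Real.sinh_pos_iff.2 hx)
  have := key (Set.self_mem_Ici) (Set.mem_Ici.2 hph.le) hph
  simpa using this

lemma cm1_pos {p h : ℝ} (hp : 0 < p) (hh : 0 < h) : 1 < Real.cosh (p * h) :=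
  Real.one_lt_cosh.2 (mul_pos hp hh).ne'

lemma identI1 {p h : ℝ} (hp : 0 < p) (hh : 0 < h) : B1 p h + p * C1 p h - p * D1 p h = 0 := by
  simp only [B1, C1, D1]
  rw [show Real.exp (-(p * h)) = (Real.exp (p * h))⁻¹ from Real.exp_neg _]
  set u := Real.exp (p * h) with hu_def
  set c := Real.cosh (p * h) with hc_def
  set s := Real.sinh (p * h) with hs_def
  set d := p * h * c - s with hd_def
  have hu : u ≠ 0 := (Real.exp_pos _).ne'
  have hd : d ≠ 0 := (den_pos hp hh).ne'
  have h1c : 1 - c ≠ 0 := by have := cm1_pos hp hh; rw [← hc_def] at this; linarith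
  have hcs : c = (u + u⁻¹) / 2 := by rw [hc_def, hu_def, Real.cosh_eq, Real.exp_neg]
  have hss : s = (u - u⁻¹) / 2 := by rw [hs_def, hu_def, Real.sinh_eq, Real.exp_neg]
  field_simp
  rw [hcs, hss]
  field_simp
  ring

lemma identI2 {p h : ℝ} (hp : 0 < p) (hh : 0 < h) :
    B1 p h + C1 p h * p * Real.exp (p * h) - D1 p h * p * Real.exp (-(p * h))
      = p * (1 - Real.cosh (p * h)) /
          (2 * (p * h * Real.cosh (p * h) - Real.sinh (p * h))) := by
  simp only [B1, C1, D1]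
  rw [show Real.exp (-(p * h)) = (Real.exp (p * h))⁻¹ from Real.exp_neg _]
  set u := Real.exp (p * h) with hu_def
  set c := Real.cosh (p * h) with hc_def
  set s := Real.sinh (p * h) with hs_def
  set d := p * h * c - s with hd_def
  have hu : u ≠ 0 := (Real.exp_pos _).ne'
  have hd : d ≠ 0 := (den_pos hp hh).ne'
  have h1c : 1 - c ≠ 0 := by have := cm1_pos hp hh; rw [← hc_def] at this; linarith
  have hcs : c = (u + u⁻¹) / 2 := by rw [hc_def, hu_def, Real.cosh_eq, Real.exp_neg]
  have hss : s = (u - u⁻¹) / 2 := by rw [hs_def, hu_def, Real.sinh_eq, Real.exp_neg]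
  field_simp
  rw [hcs, hss]
  field_simp
  ring

lemma identI3 {p h : ℝ} (hp : 0 < p) (hh : 0 < h) :
    A1 p h + B1 p h * h + C1 p h * Real.exp (p * h) + D1 p h * Real.exp (-(p * h))
      = B2 p h * (-h - Real.sinh (-(p * h)) / p) := by
  simp only [A1, B1, B2, C1, D1, Real.sinh_neg]
  rw [show Real.exp (-(p * h)) = (Real.exp (p * h))⁻¹ from Real.exp_neg _]
  set u := Real.exp (p * h) with hu_def
  set c := Real.cosh (p * h) with hc_def
  set s := Real.sinh (p * h) with hs_def
  set d := p * h * c - s with hd_def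
  have hu : u ≠ 0 := (Real.exp_pos _).ne'
  have hd : d ≠ 0 := (den_pos hp hh).ne'
  have hp' : p ≠ 0 := hp.ne'
  have h1c : 1 - c ≠ 0 := by have := cm1_pos hp hh; rw [← hc_def] at this; linarith
  have hcs : c = (u + u⁻¹) / 2 := by rw [hc_def, hu_def, Real.cosh_eq, Real.exp_neg]
  have hss : s = (u - u⁻¹) / 2 := by rw [hs_def, hu_def, Real.sinh_eq, Real.exp_neg]
  field_simp
  rw [hcs, hss]
  field_simp
  ring

lemma hasDerivAt_outerR (K p t x : ℝ) (hp : p ≠ 0) :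
    HasDerivAt (fun x => K * ((x - t) - Real.sinh (p * (x - t)) / p))
      (K * (1 - Real.cosh (p * (x - t)))) x := by
  have h0 : HasDerivAt (fun x : ℝ => x - t) 1 x := (hasDerivAt_id x).sub_const t
  have h1 : HasDerivAt (fun x : ℝ => p * (x - t)) p x := by simpa using h0.const_mul p
  have h2 : HasDerivAt (fun x : ℝ => Real.sinh (p * (x - t)))
      (Real.cosh (p * (x - t)) * p) x := (Real.hasDerivAt_sinh _).comp x h1
  have h3 := (h0.fun_sub (h2.div_const p)).const_mul K
  refine h3.congr_deriv ?_
  field_simp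

lemma hasDerivAt_outerL (K p t x : ℝ) (hp : p ≠ 0) :
    HasDerivAt (fun x => K * ((t - x) - Real.sinh (p * (t - x)) / p))
      (K * (Real.cosh (p * (t - x)) - 1)) x := by
  have h0 : HasDerivAt (fun x : ℝ => t - x) (-1) x := (hasDerivAt_id x).const_sub t
  have h1 : HasDerivAt (fun x : ℝ => p * (t - x)) (-p) x := by
    have := h0.const_mul p; simpa using this
  have h2 : HasDerivAt (fun x : ℝ => Real.sinh (p * (t - x)))
      (Real.cosh (p * (t - x)) * (-p)) x := (Real.hasDerivAt_sinh _).comp x h1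
  have h3 := (h0.fun_sub (h2.div_const p)).const_mul K
  refine h3.congr_deriv ?_
  field_simp
  ring

lemma hasDerivAt_innerR (a₁ b₁ c₁ d₁ p t x : ℝ) :
    HasDerivAt (fun x => a₁ + b₁ * (x - t) + c₁ * Real.exp (p * (x - t))
        + d₁ * Real.exp (-(p * (x - t))))
      (b₁ + c₁ * p * Real.exp (p * (x - t)) - d₁ * p * Real.exp (-(p * (x - t)))) x := by
  have h0 : HasDerivAt (fun x : ℝ => x - t) 1 x := (hasDerivAt_id x).sub_const t
  have h1 : HasDerivAt (fun x : ℝ => p * (x - t)) p x := by simpa using h0.const_mul p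
  have h1' : HasDerivAt (fun x : ℝ => -(p * (x - t))) (-p) x := h1.neg
  have h2 : HasDerivAt (fun x : ℝ => Real.exp (p * (x - t)))
      (Real.exp (p * (x - t)) * p) x := (Real.hasDerivAt_exp _).comp x h1
  have h3 : HasDerivAt (fun x : ℝ => Real.exp (-(p * (x - t))))
      (Real.exp (-(p * (x - t))) * (-p)) x := (Real.hasDerivAt_exp _).comp x h1'
  have h4 := (((hasDerivAt_const x a₁).fun_add (h0.const_mul b₁)).fun_add (h2.const_mul c₁)).fun_add
    (h3.const_mul d₁)
  refine h4.congr_deriv ?_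
  ring

lemma hasDerivAt_innerL (a₁ b₁ c₁ d₁ p t x : ℝ) :
    HasDerivAt (fun x => a₁ + b₁ * (t - x) + c₁ * Real.exp (p * (t - x))
        + d₁ * Real.exp (-(p * (t - x))))
      (-(b₁ + c₁ * p * Real.exp (p * (t - x)) - d₁ * p * Real.exp (-(p * (t - x))))) x := by
  have h0 : HasDerivAt (fun x : ℝ => t - x) (-1) x := (hasDerivAt_id x).const_sub t
  have h1 : HasDerivAt (fun x : ℝ => p * (t - x)) (-p) x := by
    have := h0.const_mul p; simpa using this
  have h1' : HasDerivAt (fun x : ℝ => -(p * (t - x))) p x := by simpa using h1.fun_neg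
  have h2 : HasDerivAt (fun x : ℝ => Real.exp (p * (t - x)))
      (Real.exp (p * (t - x)) * (-p)) x := (Real.hasDerivAt_exp _).comp x h1
  have h3 : HasDerivAt (fun x : ℝ => Real.exp (-(p * (t - x))))
      (Real.exp (-(p * (t - x))) * p) x := (Real.hasDerivAt_exp _).comp x h1'
  have h4 := (((hasDerivAt_const x a₁).fun_add (h0.const_mul b₁)).fun_add (h2.const_mul c₁)).fun_add
    (h3.const_mul d₁)
  refine h4.congr_deriv ?_
  ring

lemma hasDerivAt_of_piecewise {f gL gR : ℝ → ℝ} {D x ε : ℝ} (hε : 0 < ε)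
    (hgL : HasDerivAt gL D x) (hgR : HasDerivAt gR D x)
    (hL : ∀ y ∈ Set.Ioc (x - ε) x, f y = gL y) (hR : ∀ y ∈ Set.Ico x (x + ε), f y = gR y) :
    HasDerivAt f D x := by
  have e1 : f =ᶠ[nhdsWithin x (Set.Iic x)] gL := by
    filter_upwards [Ioc_mem_nhdsLE (by linarith : x - ε < x)] with y hy using hL y hy
  have e2 : f =ᶠ[nhdsWithin x (Set.Ici x)] gR := by
    filter_upwards [Ico_mem_nhdsGE (by linarith : x < x + ε)] with y hy using hR y hy
  have d1 : HasDerivWithinAt f D (Set.Iic x) x :=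
    (hgL.hasDerivWithinAt).congr_of_eventuallyEq e1 (hL x ⟨by linarith, le_refl x⟩)
  have d2 : HasDerivWithinAt f D (Set.Ici x) x :=
    (hgR.hasDerivWithinAt).congr_of_eventuallyEq e2 (hR x ⟨le_refl x, by linarith⟩)
  have := d1.union d2
  rw [Set.Iic_union_Ici] at this
  exact hasDerivWithinAt_univ.mp this

lemma hasDerivAt_expBspline {p h : ℝ} (a : ℝ) (hp : 0 < p) (hh : 0 < h) (m i : ℤ) :
    HasDerivAt (expBspline p h a i)
      (if i = m - 1 then
        p * (1 - Real.cosh (p * h)) / (2 * (p * h * Real.cosh (p * h) - Real.sinh (p * h)))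
       else if i = m + 1 then
        -(p * (1 - Real.cosh (p * h)) / (2 * (p * h * Real.cosh (p * h) - Real.sinh (p * h))))
       else 0)
      (a + (m : ℝ) * h) := by
  have hp' : p ≠ 0 := hp.ne'
  rcases eq_or_ne i (m - 1) with rfl | hne1
  · -- i = m - 1
    rw [if_pos rfl]
    apply hasDerivAt_of_piecewise hh
      (gL := fun y => A1 p h + B1 p h * (y - (a + ((m - 1 : ℤ) : ℝ) * h))
        + C1 p h * Real.exp (p * (y - (a + ((m - 1 : ℤ) : ℝ) * h)))
        + D1 p h * Real.exp (-(p * (y - (a + ((m - 1 : ℤ) : ℝ) * h)))))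
      (gR := fun y => B2 p h * ((y - (a + (((m - 1 : ℤ) : ℝ) + 2) * h))
        - Real.sinh (p * (y - (a + (((m - 1 : ℤ) : ℝ) + 2) * h))) / p))
    · -- left derivative
      have hd0 := hasDerivAt_innerR (A1 p h) (B1 p h) (C1 p h) (D1 p h) p
        (a + ((m - 1 : ℤ) : ℝ) * h) (a + (m : ℝ) * h)
      rw [show p * (a + (m : ℝ) * h - (a + ((m - 1 : ℤ) : ℝ) * h)) = p * h by push_cast; ring,
        identI2 hp hh] at hd0
      exact hd0
    · -- right derivative
      have hd1 := hasDerivAt_outerR (B2 p h) p (a + (((m - 1 : ℤ) : ℝ) + 2) * h)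
        (a + (m : ℝ) * h) hp'
      rw [show p * (a + (m : ℝ) * h - (a + (((m - 1 : ℤ) : ℝ) + 2) * h)) = -(p * h) by
          push_cast; ring, Real.cosh_neg] at hd1
      convert hd1 using 1
      simp only [B2]; ring
    · -- left equality
      intro y hy
      obtain ⟨hy1, hy2⟩ := hy
      rw [expBspline_apply,
        if_neg (by rintro ⟨h1, h2⟩; push_cast at h2 hy1; linarith),
        if_neg (by rintro ⟨h1, h2⟩; push_cast at h2 hy1; linarith),
        if_pos ⟨by push_cast at hy1 ⊢; linarith, by push_cast at hy2 ⊢; linarith⟩]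
    · -- right equality
      intro y hy
      obtain ⟨hy1, hy2⟩ := hy
      rcases eq_or_lt_of_le hy1 with heq | hlt
      · rw [← heq, expBspline_apply,
          if_neg (by rintro ⟨h1, h2⟩; push_cast at h2; linarith),
          if_neg (by rintro ⟨h1, h2⟩; push_cast at h2; linarith),
          if_pos ⟨by push_cast; linarith, by push_cast; linarith⟩]
        rw [show a + (m : ℝ) * h - (a + ((m - 1 : ℤ) : ℝ) * h) = h by push_cast; ring,
          show a + (m : ℝ) * h - (a + (((m - 1 : ℤ) : ℝ) + 2) * h) = -h by push_cast; ring,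
          show p * -h = -(p * h) by ring]
        exact identI3 hp hh
      · rw [expBspline_apply,
          if_neg (by rintro ⟨h1, h2⟩; push_cast at h2; linarith),
          if_neg (by rintro ⟨h1, h2⟩; push_cast at h2; linarith),
          if_neg (by rintro ⟨h1, h2⟩; push_cast at h2; linarith),
          if_pos ⟨by push_cast; linarith, by push_cast; linarith⟩]
  rcases eq_or_ne i (m + 1) with rfl | hne2
  · -- i = m + 1
    rw [if_neg hne1, if_pos rfl]
    apply hasDerivAt_of_piecewise hh
      (gL := fun y => B2 p h * ((a + (((m + 1 : ℤ) : ℝ) - 2) * h - y)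
        - Real.sinh (p * (a + (((m + 1 : ℤ) : ℝ) - 2) * h - y)) / p))
      (gR := fun y => A1 p h + B1 p h * (a + ((m + 1 : ℤ) : ℝ) * h - y)
        + C1 p h * Real.exp (p * (a + ((m + 1 : ℤ) : ℝ) * h - y))
        + D1 p h * Real.exp (-(p * (a + ((m + 1 : ℤ) : ℝ) * h - y))))
    · -- left derivative
      have hd0 := hasDerivAt_outerL (B2 p h) p (a + (((m + 1 : ℤ) : ℝ) - 2) * h)
        (a + (m : ℝ) * h) hp'
      rw [show p * (a + (((m + 1 : ℤ) : ℝ) - 2) * h - (a + (m : ℝ) * h)) = -(p * h) by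
          push_cast; ring, Real.cosh_neg] at hd0
      convert hd0 using 1
      simp only [B2]; ring
    · -- right derivative
      have hd1 := hasDerivAt_innerL (A1 p h) (B1 p h) (C1 p h) (D1 p h) p
        (a + ((m + 1 : ℤ) : ℝ) * h) (a + (m : ℝ) * h)
      rw [show p * (a + ((m + 1 : ℤ) : ℝ) * h - (a + (m : ℝ) * h)) = p * h by push_cast; ring,
        identI2 hp hh] at hd1
      exact hd1
    · -- left equality
      intro y hy
      obtain ⟨hy1, hy2⟩ := hy
      rw [expBspline_apply,
        if_pos ⟨by push_cast; linarith, by push_cast; linarith⟩]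
    · -- right equality
      intro y hy
      obtain ⟨hy1, hy2⟩ := hy
      rcases eq_or_lt_of_le hy1 with heq | hlt
      · rw [← heq, expBspline_apply,
          if_pos ⟨by push_cast; linarith, by push_cast; linarith⟩]
        rw [show a + (((m + 1 : ℤ) : ℝ) - 2) * h - (a + (m : ℝ) * h) = -h by push_cast; ring,
          show a + ((m + 1 : ℤ) : ℝ) * h - (a + (m : ℝ) * h) = h by push_cast; ring,
          show p * -h = -(p * h) by ring]
        exact (identI3 hp hh).symm
      · rw [expBspline_apply,
          if_neg (by rintro ⟨h1, h2⟩; push_cast at h2; linarith),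
          if_pos ⟨by push_cast; linarith, by push_cast; linarith⟩]
  rw [if_neg hne1, if_neg hne2]
  rcases eq_or_ne i m with rfl | hne0
  · -- i = m  (note: `m` has been substituted by `i`)
    apply hasDerivAt_of_piecewise hh
      (gL := fun y => A1 p h + B1 p h * (a + (i : ℝ) * h - y)
        + C1 p h * Real.exp (p * (a + (i : ℝ) * h - y))
        + D1 p h * Real.exp (-(p * (a + (i : ℝ) * h - y))))
      (gR := fun y => A1 p h + B1 p h * (y - (a + (i : ℝ) * h))
        + C1 p h * Real.exp (p * (y - (a + (i : ℝ) * h)))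
        + D1 p h * Real.exp (-(p * (y - (a + (i : ℝ) * h)))))
    · have hd0 := hasDerivAt_innerL (A1 p h) (B1 p h) (C1 p h) (D1 p h) p
        (a + (i : ℝ) * h) (a + (i : ℝ) * h)
      rw [show p * (a + (i : ℝ) * h - (a + (i : ℝ) * h)) = 0 by ring, neg_zero,
        Real.exp_zero] at hd0
      convert hd0 using 1
      have := identI1 hp hh
      linarith
    · have hd1 := hasDerivAt_innerR (A1 p h) (B1 p h) (C1 p h) (D1 p h) p
        (a + (i : ℝ) * h) (a + (i : ℝ) * h)
      rw [show p * (a + (i : ℝ) * h - (a + (i : ℝ) * h)) = 0 by ring, neg_zero,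
        Real.exp_zero] at hd1
      convert hd1 using 1
      have := identI1 hp hh
      linarith
    · intro y hy
      obtain ⟨hy1, hy2⟩ := hy
      rw [expBspline_apply,
        if_neg (by rintro ⟨h1, h2⟩; push_cast at h2; linarith),
        if_pos ⟨by push_cast; linarith, by push_cast; linarith⟩]
    · intro y hy
      obtain ⟨hy1, hy2⟩ := hy
      rcases eq_or_lt_of_le hy1 with heq | hlt
      · rw [← heq, expBspline_apply,
          if_neg (by rintro ⟨h1, h2⟩; push_cast at h2; linarith),
          if_pos ⟨by push_cast; linarith, by push_cast; linarith⟩]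
      · rw [expBspline_apply,
          if_neg (by rintro ⟨h1, h2⟩; push_cast at h2; linarith),
          if_neg (by rintro ⟨h1, h2⟩; push_cast at h2; linarith),
          if_pos ⟨by push_cast; linarith, by push_cast; linarith⟩]
  rcases eq_or_ne i (m - 2) with rfl | hne3
  · -- i = m - 2
    apply hasDerivAt_of_piecewise hh
      (gL := fun y => B2 p h * ((y - (a + (((m - 2 : ℤ) : ℝ) + 2) * h))
        - Real.sinh (p * (y - (a + (((m - 2 : ℤ) : ℝ) + 2) * h))) / p))
      (gR := fun _ => (0 : ℝ))
    · have hd0 := hasDerivAt_outerR (B2 p h) p (a + (((m - 2 : ℤ) : ℝ) + 2) * h)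
        (a + (m : ℝ) * h) hp'
      rw [show p * (a + (m : ℝ) * h - (a + (((m - 2 : ℤ) : ℝ) + 2) * h)) = 0 by
          push_cast; ring, Real.cosh_zero] at hd0
      convert hd0 using 1
      norm_num
    · exact hasDerivAt_const _ 0
    · intro y hy
      obtain ⟨hy1, hy2⟩ := hy
      rw [expBspline_apply,
        if_neg (by rintro ⟨h1, h2⟩; push_cast at h2 hy1; linarith),
        if_neg (by rintro ⟨h1, h2⟩; push_cast at h2 hy1; linarith),
        if_neg (by rintro ⟨h1, h2⟩; push_cast at h2 hy1; linarith),
        if_pos ⟨by push_cast at hy1 ⊢; linarith, by push_cast at hy2 ⊢; linarith⟩]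
    · intro y hy
      obtain ⟨hy1, hy2⟩ := hy
      rcases eq_or_lt_of_le hy1 with heq | hlt
      · rw [← heq, expBspline_apply,
          if_neg (by rintro ⟨h1, h2⟩; push_cast at h2; linarith),
          if_neg (by rintro ⟨h1, h2⟩; push_cast at h2; linarith),
          if_neg (by rintro ⟨h1, h2⟩; push_cast at h2; linarith),
          if_pos ⟨by push_cast; linarith, by push_cast; linarith⟩]
        rw [show a + (m : ℝ) * h - (a + (((m - 2 : ℤ) : ℝ) + 2) * h) = 0 by push_cast; ring]
        norm_num
      · rw [expBspline_apply,
          if_neg (by rintro ⟨h1, h2⟩; push_cast at h2; linarith),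
          if_neg (by rintro ⟨h1, h2⟩; push_cast at h2; linarith),
          if_neg (by rintro ⟨h1, h2⟩; push_cast at h2; linarith),
          if_neg (by rintro ⟨h1, h2⟩; push_cast at h2; linarith)]
  rcases eq_or_ne i (m + 2) with rfl | hne4
  · -- i = m + 2
    apply hasDerivAt_of_piecewise hh
      (gL := fun _ => (0 : ℝ))
      (gR := fun y => B2 p h * ((a + (((m + 2 : ℤ) : ℝ) - 2) * h - y)
        - Real.sinh (p * (a + (((m + 2 : ℤ) : ℝ) - 2) * h - y)) / p))
    · exact hasDerivAt_const _ 0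
    · have hd1 := hasDerivAt_outerL (B2 p h) p (a + (((m + 2 : ℤ) : ℝ) - 2) * h)
        (a + (m : ℝ) * h) hp'
      rw [show p * (a + (((m + 2 : ℤ) : ℝ) - 2) * h - (a + (m : ℝ) * h)) = 0 by
          push_cast; ring, Real.cosh_zero] at hd1
      convert hd1 using 1
      norm_num
    · intro y hy
      obtain ⟨hy1, hy2⟩ := hy
      rcases eq_or_lt_of_le hy2 with heq | hlt
      · rw [heq, expBspline_apply,
          if_pos ⟨by push_cast; linarith, by push_cast; linarith⟩]
        rw [show a + (((m + 2 : ℤ) : ℝ) - 2) * h - (a + (m : ℝ) * h) = 0 by push_cast; ring]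
        norm_num
      · rw [expBspline_apply,
          if_neg (by rintro ⟨h1, h2⟩; push_cast at h1; linarith),
          if_neg (by rintro ⟨h1, h2⟩; push_cast at h1; linarith),
          if_neg (by rintro ⟨h1, h2⟩; push_cast at h1; linarith),
          if_neg (by rintro ⟨h1, h2⟩; push_cast at h1; linarith)]
    · intro y hy
      obtain ⟨hy1, hy2⟩ := hy
      rw [expBspline_apply,
        if_pos ⟨by push_cast; linarith, by push_cast; linarith⟩]
  · -- far case
    have him : i ≤ m - 3 ∨ m + 3 ≤ i := by omega
    have heq0 : ∀ y ∈ Set.Ioo (a + (m : ℝ) * h - h) (a + (m : ℝ) * h + h),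
        expBspline p h a i y = 0 := by
      intro y hy
      obtain ⟨hy1, hy2⟩ := hy
      rcases him with him | him
      · have hih : (i : ℝ) * h ≤ ((m : ℝ) - 3) * h := by
          apply mul_le_mul_of_nonneg_right _ hh.le
          push_cast; exact_mod_cast by exact_mod_cast (by omega : i ≤ m - 3)
        rw [expBspline_apply,
          if_neg (by rintro ⟨h1, h2⟩; nlinarith),
          if_neg (by rintro ⟨h1, h2⟩; nlinarith),
          if_neg (by rintro ⟨h1, h2⟩; nlinarith),
          if_neg (by rintro ⟨h1, h2⟩; nlinarith)]
      · have hih : ((m : ℝ) + 3) * h ≤ (i : ℝ) * h := by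
          apply mul_le_mul_of_nonneg_right _ hh.le
          exact_mod_cast him
        rw [expBspline_apply,
          if_neg (by rintro ⟨h1, h2⟩; nlinarith),
          if_neg (by rintro ⟨h1, h2⟩; nlinarith),
          if_neg (by rintro ⟨h1, h2⟩; nlinarith),
          if_neg (by rintro ⟨h1, h2⟩; nlinarith)]
    have hmem : Set.Ioo (a + (m : ℝ) * h - h) (a + (m : ℝ) * h + h) ∈
        nhds (a + (m : ℝ) * h) := Ioo_mem_nhds (by linarith) (by linarith)
    exact (hasDerivAt_const _ (0 : ℝ)).congr_of_eventuallyEq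
      (by filter_upwards [hmem] with y hy using heq0 y hy)

/-- With `α₂ = p(1−c)/(2(phc−s))`, the spline approximation
`U_N(x) = Σ_{i=−1}^{N+1} δ_i φ_i(x)` satisfies
`U_N′(x_m) = α₂δ_{m−1} − α₂δ_{m+1}` at every knot `x_m`, `0 ≤ m ≤ N`. -/
theorem expBspline_sum_deriv_at_knots (p h : ℝ) (hp : 0 < p) (hh : 0 < h)
    (N : ℕ) (a : ℝ) (δ : ℤ → ℝ)
    (s c α₂ : ℝ) (hs : s = Real.sinh (p * h)) (hc : c = Real.cosh (p * h))
    (hα₂ : α₂ = p * (1 - c) / (2 * (p * h * c - s))) :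
    ∀ m : ℤ, 0 ≤ m → m ≤ (N : ℤ) →
      deriv (fun x => ∑ i ∈ Finset.Icc (-1 : ℤ) ((N : ℤ) + 1), δ i * expBspline p h a i x)
          (a + (m : ℝ) * h)
        = α₂ * δ (m - 1) - α₂ * δ (m + 1) := by
  intro m hm0 hmN
  subst hs hc hα₂
  set α := p * (1 - Real.cosh (p * h)) /
    (2 * (p * h * Real.cosh (p * h) - Real.sinh (p * h))) with hα_def
  have key : ∀ i ∈ Finset.Icc (-1 : ℤ) ((N : ℤ) + 1),
      HasDerivAt (fun x => δ i * expBspline p h a i x)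
        (δ i * (if i = m - 1 then α else if i = m + 1 then -α else 0)) (a + (m : ℝ) * h) :=
    fun i _ => (hasDerivAt_expBspline a hp hh m i).const_mul (δ i)
  have hsum := HasDerivAt.fun_sum key
  rw [hsum.deriv]
  have split : ∀ i : ℤ, δ i * (if i = m - 1 then α else if i = m + 1 then -α else 0)
      = (if i = m - 1 then δ (m - 1) * α else 0) + (if i = m + 1 then -(δ (m + 1) * α) else 0) := by
    intro i
    rcases eq_or_ne i (m - 1) with rfl | h1
    · have h2 : (m - 1 : ℤ) ≠ m + 1 := by omega
      rw [if_pos rfl, if_pos rfl, if_neg h2]; ring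
    · rcases eq_or_ne i (m + 1) with rfl | h2
      · rw [if_neg h1, if_pos rfl, if_neg h1, if_pos rfl]; ring
      · rw [if_neg h1, if_neg h2, if_neg h1, if_neg h2]; ring
  rw [Finset.sum_congr rfl (fun i _ => split i), Finset.sum_add_distrib,
    Finset.sum_ite_eq' _ (m - 1) (fun _ => δ (m - 1) * α),
    Finset.sum_ite_eq' _ (m + 1) (fun _ => -(δ (m + 1) * α))]
  have h1 : m - 1 ∈ Finset.Icc (-1 : ℤ) ((N : ℤ) + 1) := by
    rw [Finset.mem_Icc]; omega
  have h2 : m + 1 ∈ Finset.Icc (-1 : ℤ) ((N : ℤ) + 1) := by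
    rw [Finset.mem_Icc]; omega
  rw [if_pos h1, if_pos h2]
  ring
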